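/- If v belongs to the monotone non-negative cone K_{m+} = {x : x_1 ≥ ... ≥ x_n ≥ 0}, then prox_{Ω_w}(v) also belongs to K_{m+}. -/
import Mathlib


open Finset

/-- The vector of absolute values of x, sorted in non-increasing order. -/
noncomputable def absSorted {n : ℕ} (x : Fin n → ℝ) : Fin n → ℝ :=
  fun i => |x (Tuple.sort (fun j => -|x j|) i)|

/-- The ordered weighted l1 norm Omega_w(x). -/
noncomputable def owl {n : ℕ} (w x : Fin n → ℝ) : ℝ := ∑ i, w i * absSorted x i

/-- The objective defining the proximity operator of Omega_w at v. -/
noncomputable def proxObj {n : ℕ} (w v x : Fin n → ℝ) : ℝ :=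
  (1 / 2) * ∑ i, (x i - v i) ^ 2 + owl w x

lemma absSorted_nonneg {n : ℕ} (x : Fin n → ℝ) (i : Fin n) : 0 ≤ absSorted x i :=
  abs_nonneg _

lemma absSorted_antitone {n : ℕ} (x : Fin n → ℝ) : Antitone (absSorted x) := by
  have h := Tuple.monotone_sort (fun j => -|x j|)
  intro i j hij
  have := h hij
  simpa [absSorted, Function.comp] using this

/-- Key rearrangement bound: any permuted absolute sum is at most `owl`. -/
lemma sum_mul_abs_perm_le_owl {n : ℕ} (w : Fin n → ℝ) (hmono : Antitone w)
    (x : Fin n → ℝ) (τ : Equiv.Perm (Fin n)) :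
    ∑ i, w i * |x (τ i)| ≤ owl w x := by
  set σ := Tuple.sort (fun j => -|x j|) with hσ
  have hmv : Monovary w (absSorted x) := hmono.monovary (absSorted_antitone x)
  have h := hmv.sum_mul_comp_perm_le_sum_mul (σ := σ⁻¹ * τ)
  have hrw : ∀ i, absSorted x ((σ⁻¹ * τ) i) = |x (τ i)| := by
    intro i
    simp [absSorted, ← hσ, Equiv.Perm.mul_apply]
  calc ∑ i, w i * |x (τ i)| = ∑ i, w i * absSorted x ((σ⁻¹ * τ) i) := by
        simp_rw [hrw]
    _ ≤ ∑ i, w i * absSorted x i := h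
    _ = owl w x := rfl

lemma sum_mul_abs_le_owl {n : ℕ} (w : Fin n → ℝ) (hmono : Antitone w)
    (x : Fin n → ℝ) : ∑ i, w i * |x i| ≤ owl w x := by
  simpa using sum_mul_abs_perm_le_owl w hmono x 1

lemma absSorted_of_antitone {n : ℕ} (x : Fin n → ℝ) (hx : Antitone x)
    (h0 : ∀ i, 0 ≤ x i) : absSorted x = x := by
  have habs : ∀ j, |x j| = x j := fun j => abs_of_nonneg (h0 j)
  have hg : Monotone (fun j : Fin n => -|x j|) := by
    intro i j hij
    simp only [habs, neg_le_neg_iff]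
    exact hx hij
  have h := (Tuple.comp_sort_eq_comp_iff_monotone
      (f := fun j : Fin n => -|x j|) (σ := Equiv.refl _)).mpr (by simpa using hg)
  funext i
  have hi := congrFun h i
  simp only [Function.comp, Equiv.refl_apply, neg_inj] at hi
  simp only [absSorted]
  rw [← hi]
  exact habs i

/-- If v lies in the monotone non-negative cone, so does prox_{Omega_w}(v). -/
theorem owl_prox_mem_cone {n : ℕ} (w : Fin n → ℝ) (hmono : Antitone w)
    (hnonneg : ∀ i, 0 ≤ w i) (v p : Fin n → ℝ)
    (hv : Antitone v) (hv0 : ∀ i, 0 ≤ v i)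
    (hp : ∀ x, proxObj w v p ≤ proxObj w v x) :
    Antitone p ∧ ∀ i, 0 ≤ p i := by
  set σ := Tuple.sort (fun j => -|p j|) with hσ
  set q := absSorted p with hq
  have hq_anti : Antitone q := absSorted_antitone p
  have hq0 : ∀ i, 0 ≤ q i := absSorted_nonneg p
  -- owl of q equals owl of p
  have howlq : owl w q = owl w p := by
    unfold owl
    rw [absSorted_of_antitone q hq_anti hq0]
  -- sum of squares equal
  have hsq : ∑ i, q i ^ 2 = ∑ i, p i ^ 2 := by
    have : ∀ i, q i ^ 2 = (fun j => p j ^ 2) (σ i) := by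
      intro i; simp [hq, absSorted, ← hσ, sq_abs]
    rw [Finset.sum_congr rfl (fun i _ => this i)]
    exact Equiv.sum_comp σ (fun j => p j ^ 2)
  -- inner product inequality
  have hinner : ∑ i, p i * v i ≤ ∑ i, q i * v i := by
    have h1 : ∑ i, p i * v i ≤ ∑ i, |p i| * v i :=
      Finset.sum_le_sum fun i _ => mul_le_mul_of_nonneg_right (le_abs_self _) (hv0 i)
    have h2 : ∑ i, |p i| * v i = ∑ i, q i * v (σ i) := by
      rw [← Equiv.sum_comp σ (fun j => |p j| * v j)]
      exact Finset.sum_congr rfl fun i _ => by simp [hq, absSorted, ← hσ]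
    have hmv : Monovary q v := hq_anti.monovary hv
    have h3 : ∑ i, q i * v (σ i) ≤ ∑ i, q i * v i :=
      hmv.sum_mul_comp_perm_le_sum_mul
    linarith
  -- proxObj q ≤ proxObj p
  have hqp : proxObj w v q ≤ proxObj w v p := by
    unfold proxObj
    rw [howlq]
    have : ∑ i, (q i - v i) ^ 2 ≤ ∑ i, (p i - v i) ^ 2 := by
      have e1 : ∑ i, (q i - v i) ^ 2 =
          ∑ i, q i ^ 2 - 2 * ∑ i, q i * v i + ∑ i, v i ^ 2 := by
        rw [show ∑ i, (q i - v i) ^ 2 = ∑ i, (q i ^ 2 - 2 * (q i * v i) + v i ^ 2) from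
          Finset.sum_congr rfl fun i _ => by ring,
          Finset.sum_add_distrib, Finset.sum_sub_distrib, ← Finset.mul_sum]
      have e2 : ∑ i, (p i - v i) ^ 2 =
          ∑ i, p i ^ 2 - 2 * ∑ i, p i * v i + ∑ i, v i ^ 2 := by
        rw [show ∑ i, (p i - v i) ^ 2 = ∑ i, (p i ^ 2 - 2 * (p i * v i) + v i ^ 2) from
          Finset.sum_congr rfl fun i _ => by ring,
          Finset.sum_add_distrib, Finset.sum_sub_distrib, ← Finset.mul_sum]
      rw [e1, e2, hsq]
      linarith
    linarith
  -- midpoint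
  set m : Fin n → ℝ := fun i => (p i + q i) / 2 with hm
  have howlm : owl w m ≤ (owl w p + owl w q) / 2 := by
    set τ := Tuple.sort (fun j => -|m j|) with hτ
    have h1 : owl w m = ∑ i, w i * |m (τ i)| := rfl
    have h2 : ∑ i, w i * |m (τ i)| ≤
        ∑ i, (w i * |p (τ i)| / 2 + w i * |q (τ i)| / 2) := by
      refine Finset.sum_le_sum fun i _ => ?_
      have habs : |m (τ i)| ≤ (|p (τ i)| + |q (τ i)|) / 2 := by
        rw [hm]
        calc |(p (τ i) + q (τ i)) / 2| = |p (τ i) + q (τ i)| / 2 := by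
              rw [abs_div]; norm_num
          _ ≤ (|p (τ i)| + |q (τ i)|) / 2 := by
              have := abs_add_le (p (τ i)) (q (τ i)); linarith
      nlinarith [hnonneg i, mul_le_mul_of_nonneg_left habs (hnonneg i)]
    have h3 : ∑ i, (w i * |p (τ i)| / 2 + w i * |q (τ i)| / 2) =
        (∑ i, w i * |p (τ i)|) / 2 + (∑ i, w i * |q (τ i)|) / 2 := by
      rw [Finset.sum_add_distrib, Finset.sum_div, Finset.sum_div]
    have h4 := sum_mul_abs_perm_le_owl w hmono p τ
    have h5 := sum_mul_abs_perm_le_owl w hmono q τ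
    linarith
  have hsqm : ∑ i, (m i - v i) ^ 2 =
      (∑ i, (p i - v i) ^ 2) / 2 + (∑ i, (q i - v i) ^ 2) / 2
        - (∑ i, (p i - q i) ^ 2) / 4 := by
    rw [Finset.sum_div, Finset.sum_div, Finset.sum_div, ← Finset.sum_add_distrib,
      ← Finset.sum_sub_distrib]
    exact Finset.sum_congr rfl fun i _ => by rw [hm]; ring
  have hpm := hp m
  have hdiff : ∑ i, (p i - q i) ^ 2 ≤ 0 := by
    have hexp : proxObj w v m = (1 / 2) * ∑ i, (m i - v i) ^ 2 + owl w m := rfl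
    have hexpp : proxObj w v p = (1 / 2) * ∑ i, (p i - v i) ^ 2 + owl w p := rfl
    have hexpq : proxObj w v q = (1 / 2) * ∑ i, (q i - v i) ^ 2 + owl w q := rfl
    rw [hexp, hsqm] at hpm
    rw [hexpp] at hpm hqp
    rw [hexpq] at hqp
    linarith
  have hpq : p = q := by
    funext i
    have hz : ∀ i ∈ Finset.univ, (p i - q i) ^ 2 = 0 := by
      intro i _
      have hnn : ∀ j ∈ Finset.univ, 0 ≤ (p j - q j) ^ 2 := fun j _ => sq_nonneg _
      have := (Finset.sum_eq_zero_iff_of_nonneg hnn).mp (le_antisymm hdiff (Finset.sum_nonneg hnn))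
      exact this i (Finset.mem_univ i)
    have := hz i (Finset.mem_univ i)
    have := pow_eq_zero_iff (n := 2) (by norm_num) |>.mp this
    linarith
  rw [hpq]
  exact ⟨hq_anti, hq0⟩
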